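/- Let m ≥ 2 be an integer and α > 0 a real number, and set t̂ = arctan(√(α/(m−1))). Then for every t ∈ (0, π/2) with t ≠ t̂, the function g_{m,α}(t) = (m+α)·sin(2t)/((m+α−1)·cos(2t) − (m−α−1)) satisfies H_{m,α}(t, g_{m,α}(t)) = 0 and has nonnegative derivative, g_{m,α}'(t) ≥ 0; in particular g_{m,α} is an upper solution of the ODE w' = H_{m,α}(t,w) on (0,t̂) ∪ (t̂, π/2). -/

import Mathlib

/-- The right-hand side `H_{m,α}(t,w)` of the first-order ODE for `w = v̇`. -/
noncomputable def Hrhs (m : ℕ) (α : ℝ) (t w : ℝ) : ℝ :=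
  (1 + w ^ 2) *
    ((m : ℝ) + α +
      (((m : ℝ) - α - 1 - ((m : ℝ) + α - 1) * Real.cos (2 * t)) / Real.sin (2 * t)) * w)

/-- The explicit upper solution `g_{m,α}(t)`. -/
noncomputable def gUpper (m : ℕ) (α : ℝ) (t : ℝ) : ℝ :=
  ((m : ℝ) + α) * Real.sin (2 * t) /
    (((m : ℝ) + α - 1) * Real.cos (2 * t) - ((m : ℝ) - α - 1))

/-- The cone angle `t̂ = arctan √(α/(m−1))`. -/
noncomputable def tHat (m : ℕ) (α : ℝ) : ℝ :=
  Real.arctan (Real.sqrt (α / ((m : ℝ) - 1)))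

/-- On `(0, π/2) \ {t̂}` the function `g_{m,α}` satisfies `H_{m,α}(t, g_{m,α}(t)) = 0` and
`g_{m,α}'(t) ≥ 0`; in particular `g_{m,α}'(t) ≥ H_{m,α}(t, g_{m,α}(t))`, i.e. `g_{m,α}` is an
upper solution of `w' = H_{m,α}(t, w)` on `(0,t̂) ∪ (t̂, π/2)`. -/
theorem g_upper_solution (m : ℕ) (hm : 2 ≤ m) (α : ℝ) (hα : 0 < α)
    (t : ℝ) (ht : t ∈ Set.Ioo 0 (Real.pi / 2)) (ht' : t ≠ tHat m α) :
    Hrhs m α t (gUpper m α t) = 0 ∧ deriv (gUpper m α) t ≥ 0 ∧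
      deriv (gUpper m α) t ≥ Hrhs m α t (gUpper m α t) := by
  obtain ⟨ht0, htπ⟩ := ht
  have hm1 : (1:ℝ) ≤ (m:ℝ) - 1 := by
    have : (2:ℝ) ≤ (m:ℝ) := by exact_mod_cast hm
    linarith
  set s := Real.sin (2 * t) with hs_def
  set c := Real.cos (2 * t) with hc_def
  have hs : 0 < s := Real.sin_pos_of_pos_of_lt_pi (by linarith) (by linarith)
  have hs' : s ≠ 0 := ne_of_gt hs
  have hsc : s ^ 2 + c ^ 2 = 1 := Real.sin_sq_add_cos_sq (2 * t)
  have hc2 : c ^ 2 < 1 := by nlinarith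
  have hc_lt : c < 1 := by nlinarith [sq_nonneg (c - 1)]
  have hc_gt : -1 < c := by nlinarith [sq_nonneg (c + 1)]
  -- value of cos at 2 t̂
  have hx0 : (0:ℝ) ≤ α / ((m:ℝ) - 1) := div_nonneg hα.le (by linarith)
  have hx2 : Real.sqrt (α / ((m:ℝ) - 1)) ^ 2 = α / ((m:ℝ) - 1) := Real.sq_sqrt hx0
  have hcosHat : ((m:ℝ) + α - 1) * Real.cos (2 * tHat m α) = (m:ℝ) - α - 1 := by
    have h1 : Real.cos (2 * tHat m α)
        = 2 * (1 / Real.sqrt (1 + Real.sqrt (α / ((m:ℝ) - 1)) ^ 2)) ^ 2 - 1 := by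
      rw [Real.cos_two_mul, tHat, Real.cos_arctan]
    rw [h1]
    have h2 : Real.sqrt (1 + Real.sqrt (α / ((m:ℝ) - 1)) ^ 2) ^ 2
        = 1 + α / ((m:ℝ) - 1) := by
      rw [Real.sq_sqrt (by nlinarith [Real.sqrt_nonneg (α / ((m:ℝ) - 1))] : (0:ℝ) ≤ 1 + Real.sqrt (α / ((m:ℝ) - 1)) ^ 2), hx2]
    rw [div_pow, one_pow, h2]
    have hne : (1:ℝ) + α / ((m:ℝ) - 1) ≠ 0 := by positivity
    have hm1' : (m:ℝ) - 1 ≠ 0 := by linarith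
    field_simp
    ring
  -- denominator nonzero
  have hD : ((m:ℝ) + α - 1) * c - ((m:ℝ) - α - 1) ≠ 0 := by
    intro h0
    apply ht'
    have hcc : c = Real.cos (2 * tHat m α) := by
      have hpos : ((m:ℝ) + α - 1) ≠ 0 := by linarith
      exact mul_left_cancel₀ hpos (by linarith)
    have htHat0 : 0 ≤ tHat m α := by
      rw [tHat, ← Real.arctan_zero]
      exact Real.arctan_strictMono.monotone (Real.sqrt_nonneg _)
    have htHat1 : tHat m α < Real.pi / 2 := Real.arctan_lt_pi_div_two _
    have h2t : 2 * t = 2 * tHat m α := by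
      apply Real.injOn_cos ⟨by linarith, by linarith⟩ ⟨by linarith, by linarith⟩
      rw [← hc_def, hcc]
    linarith
  set D := ((m:ℝ) + α - 1) * c - ((m:ℝ) - α - 1) with hD_def
  -- first claim
  have hH : Hrhs m α t (gUpper m α t) = 0 := by
    have : ((m:ℝ) + α +
        (((m:ℝ) - α - 1 - ((m:ℝ) + α - 1) * c) / s) * (((m:ℝ) + α) * s / D)) = 0 := by
      rw [hD_def] at hD ⊢
      field_simp
      ring
    simp only [Hrhs, gUpper, ← hs_def, ← hc_def, ← hD_def, this, mul_zero]
  have hDeriv : deriv (gUpper m α) t ≥ 0 := by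
    have h2t : HasDerivAt (fun x : ℝ => 2 * x) 2 t := by
      simpa using (hasDerivAt_id t).const_mul 2
    have hsin : HasDerivAt (fun x : ℝ => Real.sin (2 * x)) (c * 2) t :=
      (Real.hasDerivAt_sin (2 * t)).comp t h2t
    have hcos : HasDerivAt (fun x : ℝ => Real.cos (2 * x)) (-s * 2) t :=
      (Real.hasDerivAt_cos (2 * t)).comp t h2t
    have hnum : HasDerivAt (fun x : ℝ => ((m:ℝ) + α) * Real.sin (2 * x))
        (((m:ℝ) + α) * (c * 2)) t := hsin.const_mul _
    have hden : HasDerivAt (fun x : ℝ => ((m:ℝ) + α - 1) * Real.cos (2 * x) - ((m:ℝ) - α - 1))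
        (((m:ℝ) + α - 1) * (-s * 2)) t := ((hcos.const_mul _).sub_const _)
    have hdiv := hnum.div hden hD
    have hgderiv : deriv (gUpper m α) t =
        (((m:ℝ) + α) * (c * 2) * D - ((m:ℝ) + α) * s * (((m:ℝ) + α - 1) * (-s * 2))) / D ^ 2 := by
      have : gUpper m α = fun x : ℝ => ((m:ℝ) + α) * Real.sin (2 * x) /
          (((m:ℝ) + α - 1) * Real.cos (2 * x) - ((m:ℝ) - α - 1)) := rfl
      rw [this]
      exact hdiv.deriv
    rw [hgderiv]
    apply div_nonneg _ (sq_nonneg D)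
    have key : ((m:ℝ) + α) * (c * 2) * D - ((m:ℝ) + α) * s * (((m:ℝ) + α - 1) * (-s * 2))
        = 2 * ((m:ℝ) + α) * (((m:ℝ) + α - 1) - ((m:ℝ) - α - 1) * c) := by
      rw [hD_def]; linear_combination (2 * ((m:ℝ) + α) * ((m:ℝ) + α - 1)) * hsc
    rw [key]
    have h1 : (0:ℝ) < (1 + c) * α := mul_pos (by linarith) hα
    have h2 : (0:ℝ) < (1 - c) * ((m:ℝ) - 1) := mul_pos (by linarith) (by linarith)
    have hF : (0:ℝ) < ((m:ℝ) + α - 1) - ((m:ℝ) - α - 1) * c := by nlinarith [h1, h2]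
    exact mul_nonneg (by linarith : (0:ℝ) ≤ 2 * ((m:ℝ) + α)) hF.le
  exact ⟨hH, hDeriv, by rw [hH]; exact hDeriv⟩
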